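/- Let m = n = 1 and let f : L → F be a function on the lattice L = {(x,y,t) ∈ ℤ³ : 0 ≤ x ≤ 1, 0 ≤ y ≤ 1, x+y+t even} with values in a semifield F, satisfying the corner rules of the bounded octahedron recurrence: f(0,0,t+1) = f(1,0,t)·f(0,1,t)/f(0,0,t−1), f(0,1,t+1) = f(1,1,t)·f(0,0,t)/f(0,1,t−1), f(1,0,t+1) = f(1,1,t)·f(0,0,t)/f(1,0,t−1), f(1,1,t+1) = f(0,1,t)·f(1,0,t)/f(1,1,t−1) (for appropriate parities of t). Then there exists a constant c ∈ F such that f(x,y,t) = c · f(1−x, 1−y, t−2) for all (x,y,t) ∈ L. -/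

import Mathlib

/-- A semifield in the sense of the paper: a commutative group under
multiplication, together with a commutative associative addition over
which multiplication distributes (no zero element). -/
class OctSemifield (F : Type*) extends CommGroup F, Add F where
  add_comm : ∀ a b : F, a + b = b + a
  add_assoc : ∀ a b c : F, a + b + c = a + (b + c)
  mul_add : ∀ a b c : F, a * (b + c) = a * b + a * c

/-- Periodicity of the bounded octahedron recurrence in the case m = n = 1. -/
theorem periodicity_m_eq_n_eq_one {F : Type*} [OctSemifield F]
    (f : ℤ → ℤ → ℤ → F)
    (h00 : ∀ t : ℤ, Odd t → f 0 0 (t + 1) = f 1 0 t * f 0 1 t / f 0 0 (t - 1))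
    (h01 : ∀ t : ℤ, Even t → f 0 1 (t + 1) = f 1 1 t * f 0 0 t / f 0 1 (t - 1))
    (h10 : ∀ t : ℤ, Even t → f 1 0 (t + 1) = f 1 1 t * f 0 0 t / f 1 0 (t - 1))
    (h11 : ∀ t : ℤ, Odd t → f 1 1 (t + 1) = f 0 1 t * f 1 0 t / f 1 1 (t - 1)) :
    ∃ c : F, ∀ x y t : ℤ, 0 ≤ x → x ≤ 1 → 0 ≤ y → y ≤ 1 → Even (x + y + t) →
      f x y t = c * f (1 - x) (1 - y) (t - 2) := by
  -- product forms of the recurrences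
  have P00 : ∀ t : ℤ, Odd t → f 0 0 (t + 1) * f 0 0 (t - 1) = f 1 0 t * f 0 1 t := by
    intro t ht; rw [h00 t ht]; simp
  have P11 : ∀ t : ℤ, Odd t → f 1 1 (t + 1) * f 1 1 (t - 1) = f 0 1 t * f 1 0 t := by
    intro t ht; rw [h11 t ht]; simp
  have P01 : ∀ t : ℤ, Even t → f 0 1 (t + 1) * f 0 1 (t - 1) = f 1 1 t * f 0 0 t := by
    intro t ht; rw [h01 t ht]; simp
  have P10 : ∀ t : ℤ, Even t → f 1 0 (t + 1) * f 1 0 (t - 1) = f 1 1 t * f 0 0 t := by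
    intro t ht; rw [h10 t ht]; simp
  -- shifted versions
  have Q00 : ∀ t : ℤ, Even t → f 0 0 t * f 0 0 (t - 2) = f 1 0 (t - 1) * f 0 1 (t - 1) := by
    intro t ht
    have := P00 (t - 1) (ht.sub_odd odd_one)
    rw [sub_add_cancel] at this
    simpa [sub_sub] using this
  have Q11 : ∀ t : ℤ, Even t → f 1 1 t * f 1 1 (t - 2) = f 0 1 (t - 1) * f 1 0 (t - 1) := by
    intro t ht
    have := P11 (t - 1) (ht.sub_odd odd_one)
    rw [sub_add_cancel] at this
    simpa [sub_sub] using this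
  have Q01 : ∀ t : ℤ, Odd t → f 0 1 t * f 0 1 (t - 2) = f 1 1 (t - 1) * f 0 0 (t - 1) := by
    intro t ht
    have := P01 (t - 1) (ht.sub_odd odd_one)
    rw [sub_add_cancel] at this
    simpa [sub_sub] using this
  have Q10 : ∀ t : ℤ, Odd t → f 1 0 t * f 1 0 (t - 2) = f 1 1 (t - 1) * f 0 0 (t - 1) := by
    intro t ht
    have := P10 (t - 1) (ht.sub_odd odd_one)
    rw [sub_add_cancel] at this
    simpa [sub_sub] using this
  -- the candidate constant, as a function of time
  set g : ℤ → F := fun t => if Even t then f 0 0 t / f 1 1 (t - 2) else f 0 1 t / f 1 0 (t - 2)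
    with hg
  have gstep : ∀ t : ℤ, g (t + 1) = g t := by
    intro t
    rcases Int.even_or_odd t with ht | ht
    · have hodd : ¬ Even (t + 1) := by simp [Int.even_add_one, ht]
      have e1 : t + 1 - 2 = t - 1 := by ring
      rw [hg]
      simp only [ht, hodd, if_pos, if_neg, if_true, if_false, e1]
      -- goal: f 0 1 (t+1) / f 1 0 (t-1) = f 0 0 t / f 1 1 (t-2)
      rw [div_eq_div_iff_mul_eq_mul]
      -- f 0 1 (t+1) * f 1 1 (t-2) = f 0 0 t * f 1 0 (t-1)
      have h1 := P01 t ht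
      have h2 := Q11 t ht
      have h3 : (f 0 1 (t + 1) * f 1 1 (t - 2)) * (f 0 1 (t - 1) * f 1 1 t)
          = (f 0 0 t * f 1 0 (t - 1)) * (f 0 1 (t - 1) * f 1 1 t) := by
        have h4 : (f 0 1 (t + 1) * f 0 1 (t - 1)) * (f 1 1 t * f 1 1 (t - 2))
            = (f 1 1 t * f 0 0 t) * (f 0 1 (t - 1) * f 1 0 (t - 1)) := by rw [h1, h2]
        calc (f 0 1 (t + 1) * f 1 1 (t - 2)) * (f 0 1 (t - 1) * f 1 1 t)
            = (f 0 1 (t + 1) * f 0 1 (t - 1)) * (f 1 1 t * f 1 1 (t - 2)) := by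
              simp [mul_comm, mul_left_comm, mul_assoc]
          _ = (f 1 1 t * f 0 0 t) * (f 0 1 (t - 1) * f 1 0 (t - 1)) := h4
          _ = (f 0 0 t * f 1 0 (t - 1)) * (f 0 1 (t - 1) * f 1 1 t) := by
              simp [mul_comm, mul_left_comm, mul_assoc]
      exact mul_right_cancel h3
    · have heven : Even (t + 1) := ht.add_one
      have hne : ¬ Even t := Int.not_even_iff_odd.mpr ht
      have e1 : t + 1 - 2 = t - 1 := by ring
      rw [hg]
      simp only [heven, hne, if_pos, if_neg, if_true, if_false, e1]
      rw [div_eq_div_iff_mul_eq_mul]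
      -- f 0 0 (t+1) * f 1 0 (t-2) = f 0 1 t * f 1 1 (t-1)
      have h1 := P00 t ht
      have h2 := Q10 t ht
      have h3 : (f 0 0 (t + 1) * f 1 0 (t - 2)) * (f 0 0 (t - 1) * f 1 0 t)
          = (f 0 1 t * f 1 1 (t - 1)) * (f 0 0 (t - 1) * f 1 0 t) := by
        have h4 : (f 0 0 (t + 1) * f 0 0 (t - 1)) * (f 1 0 t * f 1 0 (t - 2))
            = (f 1 0 t * f 0 1 t) * (f 1 1 (t - 1) * f 0 0 (t - 1)) := by rw [h1, h2]
        calc (f 0 0 (t + 1) * f 1 0 (t - 2)) * (f 0 0 (t - 1) * f 1 0 t)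
            = (f 0 0 (t + 1) * f 0 0 (t - 1)) * (f 1 0 t * f 1 0 (t - 2)) := by
              simp [mul_comm, mul_left_comm, mul_assoc]
          _ = (f 1 0 t * f 0 1 t) * (f 1 1 (t - 1) * f 0 0 (t - 1)) := h4
          _ = (f 0 1 t * f 1 1 (t - 1)) * (f 0 0 (t - 1) * f 1 0 t) := by
              simp [mul_comm, mul_left_comm, mul_assoc]
      exact mul_right_cancel h3
  have gconst : ∀ t : ℤ, g t = g 0 := by
    intro t
    induction t using Int.induction_on with
    | zero => rfl
    | succ k ih => rw [gstep k, ih]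
    | pred k ih => rw [← ih, ← gstep (-(k : ℤ) - 1)]; norm_num
  refine ⟨g 0, ?_⟩
  intro x y t hx0 hx1 hy0 hy1 hpar
  interval_cases x <;> interval_cases y
  · -- x = 0, y = 0, t even
    have ht : Even t := by obtain ⟨k, hk⟩ := hpar; exact ⟨k, by omega⟩
    have hgt : f 0 0 t / f 1 1 (t - 2) = g 0 := by
      rw [← gconst t, hg]; simp [ht]
    have h2 : f 0 0 t = g 0 * f 1 1 (t - 2) := by rw [← hgt]; simp
    simpa using h2
  · -- x = 0, y = 1, t odd
    have ht : Odd t := by obtain ⟨k, hk⟩ := hpar; exact ⟨k - 1, by omega⟩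
    have hne : ¬ Even t := Int.not_even_iff_odd.mpr ht
    have hgt : f 0 1 t / f 1 0 (t - 2) = g 0 := by
      rw [← gconst t, hg]; simp [hne]
    have h2 : f 0 1 t = g 0 * f 1 0 (t - 2) := by rw [← hgt]; simp
    simpa using h2
  · -- x = 1, y = 0, t odd
    have ht : Odd t := by obtain ⟨k, hk⟩ := hpar; exact ⟨k - 1, by omega⟩
    have hne : ¬ Even t := Int.not_even_iff_odd.mpr ht
    have hgt : f 0 1 t / f 1 0 (t - 2) = g 0 := by
      rw [← gconst t, hg]; simp [hne]
    have h01c : f 0 1 t = g 0 * f 1 0 (t - 2) := by rw [← hgt]; simp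
    have hswap : f 0 1 t * f 0 1 (t - 2) = f 1 0 t * f 1 0 (t - 2) := by
      rw [Q01 t ht, Q10 t ht]
    have h3 : (f 1 0 t) * (f 1 0 (t - 2)) = (g 0 * f 0 1 (t - 2)) * (f 1 0 (t - 2)) := by
      rw [← hswap, h01c]
      simp [mul_comm, mul_left_comm, mul_assoc]
    have h4 := mul_right_cancel h3
    simpa using h4
  · -- x = 1, y = 1, t even
    have ht : Even t := by obtain ⟨k, hk⟩ := hpar; exact ⟨k - 1, by omega⟩
    have hgt : f 0 0 t / f 1 1 (t - 2) = g 0 := by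
      rw [← gconst t, hg]; simp [ht]
    have h00c : f 0 0 t = g 0 * f 1 1 (t - 2) := by rw [← hgt]; simp
    have hswap : f 0 0 t * f 0 0 (t - 2) = f 1 1 t * f 1 1 (t - 2) := by
      rw [Q00 t ht, Q11 t ht, mul_comm]
    have h3 : (f 1 1 t) * (f 1 1 (t - 2)) = (g 0 * f 0 0 (t - 2)) * (f 1 1 (t - 2)) := by
      rw [← hswap, h00c]
      simp [mul_comm, mul_left_comm, mul_assoc]
    have h4 := mul_right_cancel h3
    simpa using h4
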